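/- Let B₀ > 0, r₀ > 0, m ∈ ℤ and λ ∈ ℝ. Let g : ℝ → ℝ be twice differentiable on (0, B₀r₀²/2), and define u(r) = r^{|m|}·exp(−B₀r²/4)·g(B₀r²/2) for r ∈ (0, r₀). Then for each r ∈ (0, r₀) the eigenvalue equation −u''(r) − u'(r)/r + (m²/r² + B₀²r²/4)·u(r) = λ·u(r) holds if and only if, with s = B₀r²/2, one has s·g''(s) + (|m|+1 − s)·g'(s) − (((|m|+1)B₀ − λ)/(2B₀))·g(s) = 0. -/

import Mathlib

set_option maxHeartbeats 2000000


open Real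

/-- Core computation of Theorem 4.1: with the Ansatz `u(r) = r^{|m|} e^{−B₀r²/4} g(B₀r²/2)`,
the radial eigenvalue equation for `h̃_m = −d²/dr² − (1/r)d/dr + m²/r² + B₀²r²/4` on
`(0, r₀)` is equivalent to Kummer's equation for `g` with parameters
`a = ((|m|+1)B₀ − λ)/(2B₀)` and `b = |m|+1`, evaluated at `s = B₀r²/2`. -/
theorem disc_eigenvalue_equation_to_kummer
    (B₀ r₀ : ℝ) (hB₀ : 0 < B₀) (hr₀ : 0 < r₀) (m : ℤ) (lam : ℝ)
    (g g' g'' : ℝ → ℝ)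
    (hg : ∀ s ∈ Set.Ioo 0 (B₀ * r₀ ^ 2 / 2), HasDerivAt g (g' s) s)
    (hg' : ∀ s ∈ Set.Ioo 0 (B₀ * r₀ ^ 2 / 2), HasDerivAt g' (g'' s) s)
    (u : ℝ → ℝ)
    (hu : u = fun r => r ^ m.natAbs * Real.exp (-B₀ * r ^ 2 / 4) * g (B₀ * r ^ 2 / 2)) :
    ∀ r ∈ Set.Ioo 0 r₀,
      (-(deriv (deriv u) r) - deriv u r / r
          + ((m : ℝ) ^ 2 / r ^ 2 + B₀ ^ 2 * r ^ 2 / 4) * u r = lam * u r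
        ↔ B₀ * r ^ 2 / 2 * g'' (B₀ * r ^ 2 / 2)
            + ((m.natAbs : ℝ) + 1 - B₀ * r ^ 2 / 2) * g' (B₀ * r ^ 2 / 2)
            - ((((m.natAbs : ℝ) + 1) * B₀ - lam) / (2 * B₀)) * g (B₀ * r ^ 2 / 2) = 0) := by
  subst hu
  set n := m.natAbs with hn
  intro r hr
  have hr0 : 0 < r := hr.1
  have hrne : r ≠ 0 := hr0.ne'
  -- membership of s in the domain of g
  have hsmem : ∀ x ∈ Set.Ioo (0:ℝ) r₀, B₀ * x ^ 2 / 2 ∈ Set.Ioo (0:ℝ) (B₀ * r₀ ^ 2 / 2) := by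
    intro x hx
    constructor
    · exact div_pos (mul_pos hB₀ (pow_pos hx.1 2)) two_pos
    · have : x ^ 2 < r₀ ^ 2 := by nlinarith [hx.1, hx.2]
      nlinarith
  -- derivative of s
  have hsd : ∀ x : ℝ, HasDerivAt (fun y => B₀ * y ^ 2 / 2) (B₀ * x) x := by
    intro x
    have h := ((hasDerivAt_pow 2 x).const_mul B₀).div_const 2
    refine h.congr_deriv ?_
    push_cast
    ring
  -- derivative of E
  have hEd : ∀ x : ℝ, HasDerivAt (fun y => Real.exp (-B₀ * y ^ 2 / 4))
      (Real.exp (-B₀ * x ^ 2 / 4) * (-(B₀ * x) / 2)) x := by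
    intro x
    have h := (((hasDerivAt_pow 2 x).const_mul (-B₀)).div_const 4).exp
    convert h using 1
    push_cast
    ring
  -- composed derivatives
  have hgc : ∀ x ∈ Set.Ioo (0:ℝ) r₀, HasDerivAt (fun y => g (B₀ * y ^ 2 / 2))
      (g' (B₀ * x ^ 2 / 2) * (B₀ * x)) x := by
    intro x hx
    exact (hg _ (hsmem x hx)).comp x (hsd x)
  have hg'c : ∀ x ∈ Set.Ioo (0:ℝ) r₀, HasDerivAt (fun y => g' (B₀ * y ^ 2 / 2))
      (g'' (B₀ * x ^ 2 / 2) * (B₀ * x)) x := by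
    intro x hx
    exact (hg' _ (hsmem x hx)).comp x (hsd x)
  -- the pow identity handling nat subtraction
  have hpowid : ∀ x : ℝ, x ≠ 0 → (n : ℝ) * x ^ (n - 1) = (n : ℝ) * x ^ n / x := by
    intro x hx
    cases n with
    | zero => simp
    | succ k =>
      rw [Nat.succ_sub_one]
      field_simp
      rw [pow_succ]
  -- first derivative
  set U1 : ℝ → ℝ := fun x => x ^ n * Real.exp (-B₀ * x ^ 2 / 4) *
      (((n : ℝ) * x⁻¹ - B₀ * x / 2) * g (B₀ * x ^ 2 / 2) + B₀ * x * g' (B₀ * x ^ 2 / 2))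
    with hU1
  have hder1 : ∀ x ∈ Set.Ioo (0:ℝ) r₀,
      HasDerivAt (fun r => r ^ n * Real.exp (-B₀ * r ^ 2 / 4) * g (B₀ * r ^ 2 / 2)) (U1 x) x := by
    intro x hx
    have h := ((hasDerivAt_pow n x).mul (hEd x)).mul (hgc x hx)
    refine h.congr_deriv ?_
    simp only [Pi.mul_apply]
    rw [hU1]
    rw [hpowid x hx.1.ne']
    field_simp
    ring
  have hev : deriv (fun r => r ^ n * Real.exp (-B₀ * r ^ 2 / 4) * g (B₀ * r ^ 2 / 2)) =ᶠ[nhds r] U1 := by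
    filter_upwards [Ioo_mem_nhds hr.1 hr.2] with x hx
    exact (hder1 x hx).deriv
  have e1 : deriv (fun r => r ^ n * Real.exp (-B₀ * r ^ 2 / 4) * g (B₀ * r ^ 2 / 2)) r = U1 r :=
    (hder1 r hr).deriv
  -- second derivative
  have hinv : HasDerivAt (fun y : ℝ => (n : ℝ) * y⁻¹) ((n : ℝ) * (-(r ^ 2)⁻¹)) r :=
    (hasDerivAt_inv hrne).const_mul (n : ℝ)
  have hlin : HasDerivAt (fun y : ℝ => B₀ * y / 2) (B₀ / 2) r := by
    have h := ((hasDerivAt_id r).const_mul B₀).div_const 2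
    refine h.congr_deriv ?_
    ring
  have hB : HasDerivAt (fun y : ℝ => B₀ * y) B₀ r := by
    have h := (hasDerivAt_id r).const_mul B₀
    refine h.congr_deriv ?_
    ring
  have hH := ((hinv.sub hlin).mul (hgc r hr)).add (hB.mul (hg'c r hr))
  have hU1d := ((hasDerivAt_pow n r).mul (hEd r)).mul hH
  have e2 : deriv (deriv (fun r => r ^ n * Real.exp (-B₀ * r ^ 2 / 4) * g (B₀ * r ^ 2 / 2))) r
      = (↑n * r ^ (n - 1) * Real.exp (-B₀ * r ^ 2 / 4)
          + r ^ n * (Real.exp (-B₀ * r ^ 2 / 4) * (-(B₀ * r) / 2))) *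
          (((n : ℝ) * r⁻¹ - B₀ * r / 2) * g (B₀ * r ^ 2 / 2) + B₀ * r * g' (B₀ * r ^ 2 / 2))
        + r ^ n * Real.exp (-B₀ * r ^ 2 / 4) *
          (((n : ℝ) * (-(r ^ 2)⁻¹) - B₀ / 2) * g (B₀ * r ^ 2 / 2)
            + ((n : ℝ) * r⁻¹ - B₀ * r / 2) * (g' (B₀ * r ^ 2 / 2) * (B₀ * r))
            + (B₀ * g' (B₀ * r ^ 2 / 2) + B₀ * r * (g'' (B₀ * r ^ 2 / 2) * (B₀ * r)))) := by
    rw [Filter.EventuallyEq.deriv_eq hev]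
    exact hU1d.deriv
  have hm2 : ((m : ℝ)) ^ 2 = ((n : ℝ)) ^ 2 := by
    rw [hn, Nat.cast_natAbs]
    push_cast
    rw [sq_abs]
  simp only [e1, e2, hU1, hm2]
  rw [hpowid r hrne]
  set G := g (B₀ * r ^ 2 / 2)
  set G1 := g' (B₀ * r ^ 2 / 2)
  set G2 := g'' (B₀ * r ^ 2 / 2)
  have key : -(((n : ℝ) * r ^ n / r * Real.exp (-B₀ * r ^ 2 / 4)
          + r ^ n * (Real.exp (-B₀ * r ^ 2 / 4) * (-(B₀ * r) / 2))) *
          (((n : ℝ) * r⁻¹ - B₀ * r / 2) * G + B₀ * r * G1)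
        + r ^ n * Real.exp (-B₀ * r ^ 2 / 4) *
          (((n : ℝ) * (-(r ^ 2)⁻¹) - B₀ / 2) * G
            + ((n : ℝ) * r⁻¹ - B₀ * r / 2) * (G1 * (B₀ * r))
            + (B₀ * G1 + B₀ * r * (G2 * (B₀ * r)))))
      - (r ^ n * Real.exp (-B₀ * r ^ 2 / 4) *
          (((n : ℝ) * r⁻¹ - B₀ * r / 2) * G + B₀ * r * G1)) / r
      + ((n : ℝ) ^ 2 / r ^ 2 + B₀ ^ 2 * r ^ 2 / 4) * (r ^ n * Real.exp (-B₀ * r ^ 2 / 4) * G)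
      - lam * (r ^ n * Real.exp (-B₀ * r ^ 2 / 4) * G)
      = (r ^ n * Real.exp (-B₀ * r ^ 2 / 4) * (-2 * B₀)) *
        (B₀ * r ^ 2 / 2 * G2 + ((n : ℝ) + 1 - B₀ * r ^ 2 / 2) * G1
          - ((((n : ℝ) + 1) * B₀ - lam) / (2 * B₀)) * G) := by
    field_simp
    ring
  have hc : r ^ n * Real.exp (-B₀ * r ^ 2 / 4) * (-2 * B₀) ≠ 0 := by
    have h1 : (0:ℝ) < r ^ n * Real.exp (-B₀ * r ^ 2 / 4) * (2 * B₀) := by positivity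
    intro h
    nlinarith
  constructor
  · intro h
    have h0 : (r ^ n * Real.exp (-B₀ * r ^ 2 / 4) * (-2 * B₀)) *
        (B₀ * r ^ 2 / 2 * G2 + ((n : ℝ) + 1 - B₀ * r ^ 2 / 2) * G1
          - ((((n : ℝ) + 1) * B₀ - lam) / (2 * B₀)) * G) = 0 := by
      rw [← key]; linarith [h]
    rcases mul_eq_zero.mp h0 with h1 | h1
    · exact absurd h1 hc
    · exact h1
  · intro h
    have h0 := key
    rw [h, mul_zero] at h0
    linarith [h0]
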